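/- arXiv:1806.04636 — 6 statements merged into one kernel-verified Lean document; each statement's English description precedes it below -/
import Mathlib

section
/- Let ν be a Borel probability measure on ℝ^n. Then inf{dim_H(E) : E ⊆ ℝ^n Borel, ν(E) > 0} = sup{t ∈ [0,∞) : ν is absolutely continuous with respect to ℋ^t}, where ℋ^t is the t-dimensional Hausdorff measure on ℝ^n. -/
open MeasureTheory Metric Set
open scoped NNReal ENNReal

theorem stmt_0 (n : ℕ) (ν : Measure (EuclideanSpace ℝ (Fin n)))
    [IsProbabilityMeasure ν] :
    (⨅ (E : Set (EuclideanSpace ℝ (Fin n))) (_ : MeasurableSet E) (_ : 0 < ν E), dimH E)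
      = ⨆ (t : ℝ≥0) (_ : ν ≪ Measure.hausdorffMeasure (t : ℝ)), (t : ℝ≥0∞) := by
  apply le_antisymm
  · by_contra h
    push_neg at h
    obtain ⟨t, htR, htL⟩ := ENNReal.lt_iff_exists_nnreal_btwn.mp h
    have hac : ν ≪ Measure.hausdorffMeasure (t : ℝ) := by
      intro S hS
      by_contra hνS
      have hνS' : 0 < ν S := pos_iff_ne_zero.mpr hνS
      set E := toMeasurable ν S ∩ toMeasurable (Measure.hausdorffMeasure (t : ℝ)) S with hEdef
      have hE : MeasurableSet E :=
        (measurableSet_toMeasurable _ _).inter (measurableSet_toMeasurable _ _)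
      have hSE : S ⊆ E := subset_inter (subset_toMeasurable _ _) (subset_toMeasurable _ _)
      have hνE : 0 < ν E := lt_of_lt_of_le hνS' (measure_mono hSE)
      have hμE : Measure.hausdorffMeasure (t : ℝ) E = 0 :=
        measure_mono_null inter_subset_right (by rwa [measure_toMeasurable])
      have hdim : dimH E ≤ (t : ℝ≥0∞) :=
        dimH_le_of_hausdorffMeasure_ne_top (by simp [hμE])
      have hle : (⨅ (E : Set (EuclideanSpace ℝ (Fin n))) (_ : MeasurableSet E)
          (_ : 0 < ν E), dimH E) ≤ dimH E :=
        (iInf_le _ E).trans ((iInf_le _ hE).trans (iInf_le _ hνE))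
      exact absurd (hle.trans hdim) (not_le.mpr htL)
    have : (t : ℝ≥0∞) ≤ ⨆ (t : ℝ≥0) (_ : ν ≪ Measure.hausdorffMeasure (t : ℝ)),
        (t : ℝ≥0∞) := le_iSup₂ (f := fun (t : ℝ≥0) (_ : ν ≪ Measure.hausdorffMeasure (t : ℝ)) => (t : ℝ≥0∞)) t hac
    exact absurd this (not_le.mpr htR)
  · refine iSup₂_le fun t hac => le_iInf fun E => le_iInf fun hE => le_iInf fun hνE => ?_
    by_contra h
    push_neg at h
    exact hνE.ne' (hac (hausdorffMeasure_of_dimH_lt h))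
end

section
/- Let ν be a Borel probability measure on ℝ^n. Then inf{dim_H(E) : E ⊆ ℝ^n Borel, ν(E) = 1} = inf{t ∈ [0,∞) : ν and ℋ^t are mutually singular}, where ℋ^t is the t-dimensional Hausdorff measure on ℝ^n. -/
open MeasureTheory Metric Set
open scoped NNReal ENNReal

theorem stmt_1 (n : ℕ) (ν : Measure (EuclideanSpace ℝ (Fin n)))
    [IsProbabilityMeasure ν] :
    (⨅ (E : Set (EuclideanSpace ℝ (Fin n))) (_ : MeasurableSet E) (_ : ν E = 1), dimH E)
      = ⨅ (t : ℝ≥0) (_ : ν ⟂ₘ Measure.hausdorffMeasure (t : ℝ)), (t : ℝ≥0∞) := by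
  apply le_antisymm
  · -- LHS ≤ RHS
    refine le_iInf₂ fun t ht => ?_
    refine iInf₂_le_of_le ht.nullSetᶜ ht.measurableSet_nullSet.compl <|
      iInf_le_of_le ?_ ?_
    · rw [prob_compl_eq_one_iff ht.measurableSet_nullSet]
      exact ht.measure_nullSet
    · -- dimH (nullSet)ᶜ ≤ t since μH[t] of it is 0
      by_contra h
      push_neg at h
      have := hausdorffMeasure_of_lt_dimH (X := EuclideanSpace ℝ (Fin n)) (d := t) h
      rw [ht.measure_compl_nullSet] at this
      simp at this
  · -- RHS ≤ LHS
    refine le_iInf₂ fun E hE => le_iInf fun hνE => ?_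
    by_contra h
    push_neg at h
    obtain ⟨r, hr1, hr2⟩ := ENNReal.lt_iff_exists_nnreal_btwn.1 h
    have hsing : ν ⟂ₘ Measure.hausdorffMeasure (r : ℝ) := by
      refine ⟨Eᶜ, hE.compl, ?_, ?_⟩
      · rwa [prob_compl_eq_zero_iff hE]
      · rw [compl_compl]
        exact hausdorffMeasure_of_dimH_lt hr1
    exact absurd (iInf₂_le r hsing) (not_le.2 hr2)
end

section
/- Let ν be a Borel probability measure on ℝ^n. Then inf{dim_H(E) : E ⊆ ℝ^n Borel, ν(E) > 0} equals the ν-essential infimum over x of the lower local dimension liminf_{r→0⁺} log ν(B(x,r))/log r. -/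
open MeasureTheory Metric Set Filter
open scoped NNReal ENNReal Topology

/-- The lower local dimension of a measure `ν` at a point `x`:
`liminf_{r → 0⁺} log ν(B(x,r)) / log r`, equal to `∞` when `ν(B(x,r)) = 0`
for arbitrarily small `r` (since `log 0 = -∞`). -/
noncomputable def lowerLocalDim {n : ℕ} (ν : Measure (EuclideanSpace ℝ (Fin n)))
    (x : EuclideanSpace ℝ (Fin n)) : ℝ≥0∞ :=
  Filter.liminf
    (fun r : ℝ => if ν (ball x r) = 0 then ∞
      else ENNReal.ofReal (Real.log (ν (ball x r)).toReal / Real.log r))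
    (𝓝[>] (0 : ℝ))

lemma massDist {X : Type*} [MetricSpace X] [MeasurableSpace X] [BorelSpace X]
    (ν : Measure X) (A : Set X) {d ε : ℝ} (hd : 0 < d) (hε : 0 < ε)
    (h : ∀ x ∈ A, ∀ r : ℝ, 0 < r → r ≤ ε → ν (ball x r) ≤ ENNReal.ofReal (r ^ d)) :
    ν A ≤ μH[d] A := by
  rw [MeasureTheory.Measure.hausdorffMeasure_apply]
  refine le_iSup₂_of_le (ENNReal.ofReal (ε / 2)) (ENNReal.ofReal_pos.2 (by linarith)) ?_
  refine le_iInf fun T => le_iInf fun hcov => le_iInf fun hdiam => ?_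
  have step1 : ν A ≤ ∑' n, ν (T n ∩ A) := by
    refine le_trans (measure_mono ?_) (measure_iUnion_le _)
    intro x hx
    rcases mem_iUnion.1 (hcov hx) with ⟨n, hn⟩
    exact mem_iUnion.2 ⟨n, hn, hx⟩
  refine step1.trans (ENNReal.tsum_le_tsum fun n => ?_)
  rcases (T n ∩ A).eq_empty_or_nonempty with hTA | ⟨x, hxT, hxA⟩
  · simp [hTA]
  rw [iSup_pos ⟨x, hxT⟩]
  have hfin : EMetric.diam (T n) ≠ ∞ := ((hdiam n).trans_lt ENNReal.ofReal_lt_top).ne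
  set D : ℝ := (EMetric.diam (T n)).toReal with hD
  have hD0 : 0 ≤ D := ENNReal.toReal_nonneg
  have hDε : D ≤ ε / 2 := by
    have := ENNReal.toReal_mono ENNReal.ofReal_ne_top (hdiam n)
    rwa [ENNReal.toReal_ofReal (by linarith)] at this
  have key : ∀ ρ : ℝ, D < ρ → ρ ≤ ε → ν (T n ∩ A) ≤ ENNReal.ofReal (ρ ^ d) := by
    intro ρ hρ1 hρ2
    have hsub : T n ⊆ ball x ρ := by
      intro y hy
      have h1 : edist y x ≤ EMetric.diam (T n) := EMetric.edist_le_diam_of_mem hy hxT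
      have h2 : EMetric.diam (T n) < ENNReal.ofReal ρ := by
        rw [← ENNReal.ofReal_toReal hfin]
        exact ENNReal.ofReal_lt_ofReal_iff_of_nonneg hD0 |>.2 hρ1
      exact mem_ball.2 (edist_lt_ofReal.1 (h1.trans_lt h2))
    exact le_trans (measure_mono (Set.inter_subset_left.trans hsub))
      (h x hxA ρ (hD0.trans_lt hρ1) hρ2)
  have htend : Tendsto (fun ρ : ℝ => ENNReal.ofReal (ρ ^ d)) (𝓝[>] D)
      (𝓝 (ENNReal.ofReal (D ^ d))) := by
    refine (ENNReal.continuous_ofReal.tendsto _).comp ?_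
    exact ((Real.continuousAt_rpow_const D d (Or.inr hd.le)).tendsto).mono_left
      nhdsWithin_le_nhds
  have hbound : ν (T n ∩ A) ≤ ENNReal.ofReal (D ^ d) := by
    refine ge_of_tendsto htend ?_
    filter_upwards [Ioo_mem_nhdsGT_of_mem ⟨le_refl D, show D < ε by linarith⟩] with ρ hρ
    exact key ρ hρ.1 hρ.2.le
  rwa [← ENNReal.ofReal_rpow_of_nonneg hD0 hd.le, ENNReal.ofReal_toReal hfin] at hbound

lemma coverExists {X : Type*} [MetricSpace X] [MeasurableSpace X] [BorelSpace X]
    (ν : Measure X) [IsFiniteMeasure ν] (A : Set X) {t : ℝ}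
    (h : ∀ x ∈ A, ∀ δ : ℝ, 0 < δ → ∃ r, 0 < r ∧ r < δ ∧
      ENNReal.ofReal (r ^ t) ≤ ν (ball x r))
    {δ : ℝ} (hδ : 0 < δ) :
    ∃ (u : Set X) (rad : X → ℝ), u.Countable ∧ (∀ b ∈ u, 0 < rad b ∧ rad b < δ) ∧
      (A ⊆ ⋃ b ∈ u, closedBall b (4 * rad b)) ∧
      (∀ b ∈ u, ENNReal.ofReal (rad b ^ t) ≤ ν (ball b (rad b))) ∧
      (∑' b : u, ν (closedBall b (rad (b : X)))) ≤ ν Set.univ := by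
  have H : ∀ x : X, ∃ r : ℝ, 0 < r ∧ r < δ ∧
      (x ∈ A → ENNReal.ofReal (r ^ t) ≤ ν (ball x r)) := by
    intro x
    by_cases hx : x ∈ A
    · obtain ⟨r, h1, h2, h3⟩ := h x hx δ hδ
      exact ⟨r, h1, h2, fun _ => h3⟩
    · exact ⟨δ / 2, by linarith, by linarith, fun hc => absurd hc hx⟩
  choose rad hr0 hrδ hrν using H
  obtain ⟨u, huA, hdisj, hcov⟩ :=
    Vitali.exists_disjoint_subfamily_covering_enlargement_closedBall A id rad δ
      (fun a _ => (hrδ a).le) 4 (by norm_num)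
  have hdisj' : Pairwise (Function.onFun Disjoint fun b : u => closedBall (b : X) (rad (b : X))) := by
    intro i j hij
    exact hdisj i.2 j.2 (fun hval => hij (Subtype.ext hval))
  have hcnt : u.Countable := by
    have hc : Set.Countable {i : u | 0 < ν (closedBall (i : X) (rad (i : X)))} :=
      MeasureTheory.Measure.countable_meas_pos_of_disjoint_of_meas_iUnion_ne_top ν
        (fun _ => measurableSet_closedBall) hdisj' (measure_ne_top ν _)
    have huniv : {i : u | 0 < ν (closedBall (i : X) (rad (i : X)))} = Set.univ := by
      refine eq_univ_of_forall fun i => ?_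
      have h1 : (0 : ℝ≥0∞) < ENNReal.ofReal (rad (i : X) ^ t) :=
        ENNReal.ofReal_pos.2 (Real.rpow_pos_of_pos (hr0 _) t)
      exact h1.trans_le ((hrν _ (huA i.2)).trans (measure_mono ball_subset_closedBall))
    rw [huniv] at hc
    exact Set.countable_coe_iff.2 (Set.countable_univ_iff.1 hc)
  refine ⟨u, rad, hcnt, fun b _ => ⟨hr0 b, hrδ b⟩, ?_, fun b hb => hrν b (huA hb), ?_⟩
  · intro a ha
    obtain ⟨b, hbu, hsub⟩ := hcov a ha
    exact mem_biUnion hbu (hsub (mem_closedBall_self (hr0 a).le))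
  · haveI := hcnt.to_subtype
    rw [← measure_iUnion hdisj' (fun _ => measurableSet_closedBall)]
    exact measure_mono (subset_univ _)

lemma diam8 {X : Type*} [MetricSpace X] (c : X) (ρ : ℝ) :
    EMetric.diam (closedBall c (4 * ρ)) ≤ ENNReal.ofReal (8 * ρ) := by
  refine EMetric.diam_le fun y hy z hz => ?_
  rw [edist_dist]
  refine ENNReal.ofReal_le_ofReal ?_
  have hy' := mem_closedBall.1 hy
  have hz' := mem_closedBall.1 hz
  have := dist_triangle y c z
  have hcz : dist c z = dist z c := dist_comm c z
  linarith

set_option maxHeartbeats 1000000 in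
lemma upperDim {X : Type*} [MetricSpace X] [MeasurableSpace X] [BorelSpace X]
    (ν : Measure X) [IsFiniteMeasure ν] (A : Set X) {t s : ℝ} (ht : 0 ≤ t) (hts : t < s)
    (h : ∀ x ∈ A, ∀ δ : ℝ, 0 < δ → ∃ r, 0 < r ∧ r < δ ∧
      ENNReal.ofReal (r ^ t) ≤ ν (ball x r)) :
    μH[s] A = 0 := by
  have hs : 0 ≤ s := ht.trans hts.le
  set δ : ℕ → ℝ := fun n => ((n : ℝ) + 1)⁻¹ with hδdef
  have hδpos : ∀ n, 0 < δ n := fun n => by positivity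
  have hδ0 : Tendsto δ atTop (𝓝 0) := by
    have := tendsto_one_div_add_atTop_nhds_zero_nat (𝕜 := ℝ)
    simpa [hδdef, one_div] using this
  choose u rad hcnt hrad hcov hlow hsum using fun n => coverExists ν A (t := t) h (hδpos n)
  haveI : ∀ n, Countable ↥(u n) := fun n => (hcnt n).to_subtype
  have main : μH[s] A ≤ liminf (fun n => ∑' i : ↥(u n),
      EMetric.diam (closedBall (i : X) (4 * rad n (i : X))) ^ s) atTop := by
    refine MeasureTheory.Measure.hausdorffMeasure_le_liminf_tsum s A
      (fun n => ENNReal.ofReal (8 * δ n)) ?_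
      (fun n (i : ↥(u n)) => closedBall (i : X) (4 * rad n (i : X))) ?_ ?_
    · rw [show (0 : ℝ≥0∞) = ENNReal.ofReal (8 * 0) by simp]
      exact (ENNReal.continuous_ofReal.tendsto _).comp (hδ0.const_mul 8)
    · refine Eventually.of_forall fun n => fun i => ?_
      refine le_trans (diam8 _ _) (ENNReal.ofReal_le_ofReal ?_)
      have h2 := (hrad n (i : X) i.2).2
      linarith
    · refine Eventually.of_forall fun n => ?_
      intro x hx
      obtain ⟨b, hb, hxb⟩ := mem_iUnion₂.1 (hcov n hx)
      exact mem_iUnion.2 ⟨⟨b, hb⟩, hxb⟩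
  refine le_antisymm ?_ zero_le
  refine le_trans main ?_
  have hbound : ∀ n, (∑' i : ↥(u n),
      EMetric.diam (closedBall (i : X) (4 * rad n (i : X))) ^ s)
      ≤ ENNReal.ofReal (8 ^ s * δ n ^ (s - t)) * ν Set.univ := by
    intro n
    have step : ∀ i : ↥(u n),
        EMetric.diam (closedBall (i : X) (4 * rad n (i : X))) ^ s
          ≤ ENNReal.ofReal (8 ^ s * δ n ^ (s - t)) * ν (closedBall (i : X) (rad n (i : X))) := by
      intro i
      obtain ⟨hr0, hrδ⟩ := hrad n (i : X) i.2
      have hdiam : EMetric.diam (closedBall (i : X) (4 * rad n (i : X)))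
          ≤ ENNReal.ofReal (8 * rad n (i : X)) := diam8 _ _
      calc EMetric.diam (closedBall (i : X) (4 * rad n (i : X))) ^ s
          ≤ ENNReal.ofReal (8 * rad n (i : X)) ^ s := ENNReal.rpow_le_rpow hdiam hs
        _ = ENNReal.ofReal ((8 * rad n (i : X)) ^ s) :=
            ENNReal.ofReal_rpow_of_nonneg (by linarith) hs
        _ ≤ ENNReal.ofReal (8 ^ s * δ n ^ (s - t) * rad n (i : X) ^ t) := by
            refine ENNReal.ofReal_le_ofReal ?_
            rw [Real.mul_rpow (by norm_num) hr0.le]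
            have : rad n (i : X) ^ s = rad n (i : X) ^ (s - t) * rad n (i : X) ^ t := by
              rw [← Real.rpow_add hr0]; ring_nf
            rw [this, ← mul_assoc]
            have hfac : rad n (i : X) ^ (s - t) ≤ δ n ^ (s - t) :=
              Real.rpow_le_rpow hr0.le hrδ.le (by linarith)
            have h8 : (0:ℝ) ≤ (8:ℝ) ^ s := Real.rpow_nonneg (by norm_num) s
            have hrt : (0:ℝ) ≤ rad n (i : X) ^ t := Real.rpow_nonneg hr0.le t
            exact mul_le_mul_of_nonneg_right
              (mul_le_mul_of_nonneg_left hfac h8) hrt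
        _ = ENNReal.ofReal (8 ^ s * δ n ^ (s - t)) * ENNReal.ofReal (rad n (i : X) ^ t) := by
            rw [← ENNReal.ofReal_mul (by positivity)]
        _ ≤ ENNReal.ofReal (8 ^ s * δ n ^ (s - t)) * ν (closedBall (i : X) (rad n (i : X))) := by
            gcongr
            exact (hlow n _ i.2).trans (measure_mono ball_subset_closedBall)
    calc (∑' i : ↥(u n), EMetric.diam (closedBall (i : X) (4 * rad n (i : X))) ^ s)
        ≤ ∑' i : ↥(u n), ENNReal.ofReal (8 ^ s * δ n ^ (s - t)) *
            ν (closedBall (i : X) (rad n (i : X))) := ENNReal.tsum_le_tsum step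
      _ = ENNReal.ofReal (8 ^ s * δ n ^ (s - t)) *
            ∑' i : ↥(u n), ν (closedBall (i : X) (rad n (i : X))) := ENNReal.tsum_mul_left
      _ ≤ ENNReal.ofReal (8 ^ s * δ n ^ (s - t)) * ν Set.univ := by gcongr; exact hsum n
  refine le_trans (liminf_le_liminf (Eventually.of_forall hbound)) ?_
  have htendB : Tendsto (fun n => ENNReal.ofReal (8 ^ s * δ n ^ (s - t)) * ν Set.univ)
      atTop (𝓝 0) := by
    have h1 : Tendsto (fun n => δ n ^ (s - t)) atTop (𝓝 0) := by
      have hc := (Real.continuousAt_rpow_const 0 (s - t) (Or.inr (by linarith))).tendsto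
      rw [Real.zero_rpow (by linarith : s - t ≠ 0)] at hc
      exact hc.comp hδ0
    have h2 : Tendsto (fun n => ENNReal.ofReal (8 ^ s * δ n ^ (s - t))) atTop (𝓝 0) := by
      rw [show (0 : ℝ≥0∞) = ENNReal.ofReal (8 ^ s * 0) by simp]
      exact (ENNReal.continuous_ofReal.tendsto _).comp (h1.const_mul _)
    have := ENNReal.Tendsto.mul_const h2 (Or.inr (measure_ne_top ν Set.univ))
    simpa using this
  rw [htendB.liminf_eq]

theorem stmt_2 (n : ℕ) (ν : Measure (EuclideanSpace ℝ (Fin n)))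
    [IsProbabilityMeasure ν] :
    (⨅ (E : Set (EuclideanSpace ℝ (Fin n))) (_ : MeasurableSet E) (_ : 0 < ν E), dimH E)
      = essInf (lowerLocalDim ν) ν := by
  set f := lowerLocalDim ν with hf
  apply le_antisymm
  · -- inf ≤ essInf
    by_contra hlt
    push_neg at hlt
    obtain ⟨c, hc1, hc2⟩ := ENNReal.lt_iff_exists_nnreal_btwn.1 hlt
    obtain ⟨t', ht1, ht2⟩ := ENNReal.lt_iff_exists_nnreal_btwn.1 hc1
    set A := {x : EuclideanSpace ℝ (Fin n) | f x < (t' : ℝ≥0∞)} with hA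
    have hA0 : ν A ≠ 0 := by
      intro h0
      have hmem : (t' : ℝ≥0∞) ∈ {a : ℝ≥0∞ | ν {x | f x < a} = 0} := h0
      have := le_sSup hmem
      rw [← essInf_eq_sSup ν f] at this
      exact absurd (this.trans_lt ht1) (lt_irrefl _)
    have hfreq : ∀ x ∈ A, ∀ δ : ℝ, 0 < δ → ∃ r, 0 < r ∧ r < δ ∧
        ENNReal.ofReal (r ^ (t' : ℝ)) ≤ ν (ball x r) := by
      intro x hx δ hδ
      have hfr : ∃ᶠ r in 𝓝[>] (0 : ℝ),
          (if ν (ball x r) = 0 then ∞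
            else ENNReal.ofReal (Real.log (ν (ball x r)).toReal / Real.log r))
            < (t' : ℝ≥0∞) := frequently_lt_of_liminf_lt (h := hx)
      have hev : Ioo (0 : ℝ) (min δ 1) ∈ 𝓝[>] (0 : ℝ) :=
        Ioo_mem_nhdsGT_of_mem ⟨le_refl 0, lt_min hδ one_pos⟩
      obtain ⟨r, hgr, hr0, hr1⟩ := (hfr.and_eventually (eventually_of_mem hev (fun r hr => hr))).exists
      refine ⟨r, hr0, hr1.trans_le (min_le_left _ _), ?_⟩
      have hne : ν (ball x r) ≠ 0 := by
        intro hb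
        rw [if_pos hb] at hgr
        exact absurd hgr (by simp)
      rw [if_neg hne] at hgr
      set m := (ν (ball x r)).toReal with hm
      have hmpos : 0 < m := ENNReal.toReal_pos hne (measure_ne_top ν _)
      have hlr : Real.log r < 0 := Real.log_neg hr0 (hr1.trans_le (min_le_right _ _))
      have hL : Real.log m / Real.log r < (t' : ℝ) := by
        by_contra hle
        push_neg at hle
        exact absurd (ENNReal.ofReal_le_ofReal hle) (not_le.2 (by
          rw [ENNReal.ofReal_coe_nnreal]; exact hgr))
      have h1 : (t' : ℝ) * Real.log r < Real.log m := (div_lt_iff_of_neg hlr).1 hL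
      rw [← Real.log_rpow hr0] at h1
      have h2 : r ^ (t' : ℝ) < m :=
        (Real.log_lt_log_iff (Real.rpow_pos_of_pos hr0 _) hmpos).1 h1
      calc ENNReal.ofReal (r ^ (t' : ℝ)) ≤ ENNReal.ofReal m := ENNReal.ofReal_le_ofReal h2.le
        _ = ν (ball x r) := ENNReal.ofReal_toReal (measure_ne_top ν _)
    have hct : (t' : ℝ) < (c : ℝ) := by exact_mod_cast ht2
    have hH : μH[(c : ℝ)] A = 0 := upperDim ν A t'.2 hct hfreq
    set E := toMeasurable (μH[(c : ℝ)]) A with hE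
    have hdim : dimH E ≤ (c : ℝ≥0∞) := by
      refine dimH_le_of_hausdorffMeasure_ne_top (d := c) ?_
      rw [show ((c : ℝ≥0) : ℝ) = (c : ℝ) from rfl, hE, measure_toMeasurable, hH]
      exact ENNReal.zero_ne_top
    have hEν : 0 < ν E := by
      refine lt_of_lt_of_le ?_ (measure_mono (subset_toMeasurable _ _))
      exact pos_iff_ne_zero.2 hA0
    have hinf : (⨅ (E : Set (EuclideanSpace ℝ (Fin n))) (_ : MeasurableSet E)
        (_ : 0 < ν E), dimH E) ≤ dimH E :=
      iInf_le_of_le E (iInf_le_of_le (measurableSet_toMeasurable _ _) (iInf_le _ hEν))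
    exact absurd ((hinf.trans hdim).trans_lt hc2) (lt_irrefl _)
  · -- essInf ≤ inf
    refine le_iInf fun E => le_iInf fun hE => le_iInf fun hν => ?_
    refine ENNReal.le_of_forall_nnreal_lt fun c hc => ?_
    rcases eq_or_lt_of_le (zero_le : (0 : ℝ≥0) ≤ c) with hc0 | hc0
    · rw [← hc0]; simp
    have hc0' : (0 : ℝ) < (c : ℝ) := hc0
    have hae : ∀ᵐ x ∂ν, (c : ℝ≥0∞) < f x := ae_lt_of_lt_essInf hc
    have hae2 : ∀ᵐ x ∂ν, ∃ k : ℕ, ∀ r : ℝ, 0 < r → r ≤ ((k : ℝ) + 1)⁻¹ →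
        ν (ball x r) ≤ ENNReal.ofReal (r ^ (c : ℝ)) := by
      filter_upwards [hae] with x hx
      have hev : ∀ᶠ r in 𝓝[>] (0 : ℝ),
          (c : ℝ≥0∞) < (if ν (ball x r) = 0 then ∞
            else ENNReal.ofReal (Real.log (ν (ball x r)).toReal / Real.log r)) :=
        eventually_lt_of_lt_liminf hx
      have hev2 := hev.and (eventually_of_mem
        (Ioo_mem_nhdsGT_of_mem ⟨le_refl (0:ℝ), one_pos⟩) (fun r hr => hr))
      obtain ⟨ε, hε, hsub⟩ := mem_nhdsGT_iff_exists_Ioo_subset.1 hev2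
      obtain ⟨k, hk⟩ := exists_nat_gt (1 / ε)
      have hε0 : 0 < ε := hε
      have hkε : ((k : ℝ) + 1)⁻¹ < ε := by
        rw [inv_lt_comm₀ (by positivity) hε0] at *
        · calc ε⁻¹ = 1 / ε := (one_div ε).symm
            _ < k := hk
            _ < k + 1 := by linarith
      refine ⟨k, fun r hr0 hrk => ?_⟩
      have hrε : r ∈ Ioo (0:ℝ) ε := ⟨hr0, lt_of_le_of_lt hrk hkε⟩
      obtain ⟨hgr, _, hr1⟩ := hsub hrε
      by_cases hb : ν (ball x r) = 0
      · simp [hb]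
      rw [if_neg hb] at hgr
      set m := (ν (ball x r)).toReal with hm
      have hmpos : 0 < m := ENNReal.toReal_pos hb (measure_ne_top ν _)
      have hlr : Real.log r < 0 := Real.log_neg hr0 hr1
      have hL : (c : ℝ) < Real.log m / Real.log r := by
        rw [← ENNReal.ofReal_coe_nnreal] at hgr
        by_contra hle
        push_neg at hle
        exact absurd (ENNReal.ofReal_le_ofReal hle) (not_le.2 hgr)
      have h1 : Real.log m < (c : ℝ) * Real.log r := (lt_div_iff_of_neg hlr).1 hL
      rw [← Real.log_rpow hr0] at h1
      have h2 : m < r ^ (c : ℝ) :=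
        (Real.log_lt_log_iff hmpos (Real.rpow_pos_of_pos hr0 _)).1 h1
      calc ν (ball x r) = ENNReal.ofReal m := (ENNReal.ofReal_toReal (measure_ne_top ν _)).symm
        _ ≤ ENNReal.ofReal (r ^ (c : ℝ)) := ENNReal.ofReal_le_ofReal h2.le
    set G := fun k : ℕ => {x : EuclideanSpace ℝ (Fin n) | ∀ r : ℝ, 0 < r →
      r ≤ ((k : ℝ) + 1)⁻¹ → ν (ball x r) ≤ ENNReal.ofReal (r ^ (c : ℝ))} with hG
    have hkey : ∃ k, ν (E ∩ G k) ≠ 0 := by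
      by_contra hall
      push_neg at hall
      have hcup : ν (⋃ k, E ∩ G k) = 0 := by
        rw [measure_iUnion_null_iff]
        exact fun k => hall k
      have hbad : ν ({x | ¬ ∃ k : ℕ, x ∈ G k}) = 0 := by
        have := hae2
        rw [ae_iff] at this
        convert this using 2
        rfl
      have hsub : E ⊆ (⋃ k, E ∩ G k) ∪ {x | ¬ ∃ k : ℕ, x ∈ G k} := by
        intro x hx
        by_cases hxg : ∃ k, x ∈ G k
        · obtain ⟨k, hk⟩ := hxg
          exact Or.inl (mem_iUnion.2 ⟨k, hx, hk⟩)
        · exact Or.inr hxg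
      have : ν E = 0 := by
        refine le_antisymm ?_ zero_le
        calc ν E ≤ ν ((⋃ k, E ∩ G k) ∪ {x | ¬ ∃ k : ℕ, x ∈ G k}) := measure_mono hsub
          _ ≤ ν (⋃ k, E ∩ G k) + ν {x | ¬ ∃ k : ℕ, x ∈ G k} := measure_union_le _ _
          _ = 0 := by rw [hcup, hbad, add_zero]
      exact absurd this (pos_iff_ne_zero.1 hν)
    obtain ⟨k, hk⟩ := hkey
    have hmass := massDist ν (E ∩ G k) hc0' (by positivity : (0:ℝ) < ((k : ℝ) + 1)⁻¹)
      (fun x hx r h1 h2 => hx.2 r h1 h2)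
    have hHne : μH[(c : ℝ)] (E ∩ G k) ≠ 0 := by
      intro h0
      rw [h0] at hmass
      exact hk (le_antisymm hmass zero_le)
    have := le_dimH_of_hausdorffMeasure_ne_zero (d := c) hHne
    exact this.trans (dimH_mono inter_subset_left)
end

section
/- Let ν be a Borel probability measure on ℝ^n and α ≥ 0. Then the following are equivalent: (i) inf{dim_H(E) : E Borel, ν(E) > 0} = inf{dim_H(E) : E Borel, ν(E) = 1} = α; (ii) there exists a Borel set E ⊆ ℝ^n with dim_H(E) = α and ν(E) = 1, and moreover ν(E) = 0 for every Borel set E with dim_H(E) < α. -/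
open MeasureTheory Metric Set
open scoped NNReal ENNReal

theorem stmt_6 (n : ℕ) (ν : Measure (EuclideanSpace ℝ (Fin n)))
    [IsProbabilityMeasure ν] (α : ℝ≥0) :
    ((⨅ (E : Set (EuclideanSpace ℝ (Fin n))) (_ : MeasurableSet E) (_ : 0 < ν E), dimH E)
          = (α : ℝ≥0∞)
        ∧ (⨅ (E : Set (EuclideanSpace ℝ (Fin n))) (_ : MeasurableSet E) (_ : ν E = 1), dimH E)
          = (α : ℝ≥0∞))
      ↔ ((∃ E : Set (EuclideanSpace ℝ (Fin n)),
            MeasurableSet E ∧ dimH E = (α : ℝ≥0∞) ∧ ν E = 1)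
        ∧ (∀ E : Set (EuclideanSpace ℝ (Fin n)),
            MeasurableSet E → dimH E < (α : ℝ≥0∞) → ν E = 0)) := by
  constructor
  · rintro ⟨hA, hB⟩
    have hnull : ∀ E : Set (EuclideanSpace ℝ (Fin n)),
        MeasurableSet E → dimH E < (α : ℝ≥0∞) → ν E = 0 := by
      intro E hE hd
      by_contra h0
      have hpos : 0 < ν E := pos_iff_ne_zero.mpr h0
      have : (α : ℝ≥0∞) ≤ dimH E := by
        rw [← hA]
        exact iInf_le_of_le E (iInf_le_of_le hE (iInf_le _ hpos))
      exact absurd hd (not_lt.mpr this)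
    refine ⟨?_, hnull⟩
    have hex : ∀ k : ℕ, ∃ S : Set (EuclideanSpace ℝ (Fin n)),
        MeasurableSet S ∧ ν S = 1 ∧ dimH S < (α : ℝ≥0∞) + (k : ℝ≥0∞)⁻¹ := by
      intro k
      have hlt : (⨅ (E : Set (EuclideanSpace ℝ (Fin n))) (_ : MeasurableSet E)
          (_ : ν E = 1), dimH E) < (α : ℝ≥0∞) + (k : ℝ≥0∞)⁻¹ := by
        rw [hB]
        exact ENNReal.lt_add_right ENNReal.coe_ne_top
          (ENNReal.inv_ne_zero.mpr (ENNReal.natCast_ne_top k))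
      simp only [iInf_lt_iff] at hlt
      obtain ⟨S, hS, h1, hd⟩ := hlt
      exact ⟨S, hS, h1, hd⟩
    choose S hSm hS1 hSd using hex
    have h1 : ν (⋂ k, S k) = 1 := by
      have hc : ν (⋃ k, (S k)ᶜ) = 0 :=
        measure_iUnion_null fun k => by
          simpa [prob_compl_eq_zero_iff (hSm k)] using hS1 k
      have : ν (⋂ k, S k)ᶜ = 0 := by rwa [compl_iInter]
      rwa [prob_compl_eq_zero_iff (MeasurableSet.iInter hSm)] at this
    have hle : dimH (⋂ k, S k) ≤ (α : ℝ≥0∞) := by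
      refine ENNReal.le_of_forall_pos_le_add fun ε hε _ => ?_
      obtain ⟨k, hk⟩ := ENNReal.exists_inv_nat_lt
        (by exact_mod_cast hε.ne' : (ε : ℝ≥0∞) ≠ 0)
      calc dimH (⋂ k, S k) ≤ dimH (S k) := dimH_mono (iInter_subset _ k)
        _ ≤ (α : ℝ≥0∞) + (k : ℝ≥0∞)⁻¹ := (hSd k).le
        _ ≤ (α : ℝ≥0∞) + ε := add_le_add le_rfl hk.le
    have hge : (α : ℝ≥0∞) ≤ dimH (⋂ k, S k) := by
      rw [← hA]
      exact iInf_le_of_le _ (iInf_le_of_le (MeasurableSet.iInter hSm)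
        (iInf_le _ (by simp [h1])))
    exact ⟨⋂ k, S k, MeasurableSet.iInter hSm, le_antisymm hle hge, h1⟩
  · rintro ⟨⟨E₀, hE₀m, hE₀d, hE₀1⟩, hnull⟩
    have hge : ∀ E : Set (EuclideanSpace ℝ (Fin n)),
        MeasurableSet E → 0 < ν E → (α : ℝ≥0∞) ≤ dimH E := by
      intro E hE hpos
      by_contra h
      exact hpos.ne' (hnull E hE (not_le.mp h))
    constructor
    · refine le_antisymm ?_ ?_
      · exact iInf_le_of_le E₀ (iInf_le_of_le hE₀m
          (le_trans (iInf_le _ (by simp [hE₀1])) hE₀d.le))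
      · exact le_iInf fun E => le_iInf fun hE => le_iInf fun hpos => hge E hE hpos
    · refine le_antisymm ?_ ?_
      · exact iInf_le_of_le E₀ (iInf_le_of_le hE₀m
          (le_trans (iInf_le _ hE₀1) hE₀d.le))
      · exact le_iInf fun E => le_iInf fun hE => le_iInf fun h1 =>
          hge E hE (by simp [h1])
end

section
/- Let ν be a Borel probability measure on ℝ^n and α ≥ 0. Then the following are equivalent: (i) there exists a Borel set E ⊆ ℝ^n with dim_H(E) = α and ν(E) = 1, and ν(E) = 0 for every Borel set E with dim_H(E) < α; (ii) for every ε > 0, ν is absolutely continuous with respect to ℋ^{α−ε} and ν is mutually singular with ℋ^{α+ε}, where ℋ^t is the t-dimensional Hausdorff measure on ℝ^n (with ℋ^{α−ε} read as ℋ^0 when ε > α). -/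
open MeasureTheory Metric Set
open scoped NNReal ENNReal

theorem stmt_7 (n : ℕ) (ν : Measure (EuclideanSpace ℝ (Fin n)))
    [IsProbabilityMeasure ν] (α : ℝ≥0) :
    ((∃ E : Set (EuclideanSpace ℝ (Fin n)),
          MeasurableSet E ∧ dimH E = (α : ℝ≥0∞) ∧ ν E = 1)
        ∧ (∀ E : Set (EuclideanSpace ℝ (Fin n)),
          MeasurableSet E → dimH E < (α : ℝ≥0∞) → ν E = 0))
      ↔ (∀ ε : ℝ≥0, 0 < ε →
          ν ≪ Measure.hausdorffMeasure ((α - ε : ℝ≥0) : ℝ)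
            ∧ ν ⟂ₘ Measure.hausdorffMeasure ((α + ε : ℝ≥0) : ℝ)) := by
  constructor
  · rintro ⟨⟨E, hEm, hEdim, hE1⟩, hnull⟩ ε hε
    constructor
    · -- absolute continuity w.r.t. μH[α - ε]
      intro A hA
      rcases eq_or_lt_of_le (zero_le : (0 : ℝ≥0) ≤ α) with hα | hα
      · -- α = 0, so α - ε = 0 and μH[0] A = 0 forces A = ∅
        have h0 : (α - ε : ℝ≥0) = 0 := by rw [← hα, zero_tsub]
        rw [h0, NNReal.coe_zero] at hA
        have : A = ∅ := by
          by_contra h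
          have hne : A.Nonempty := nonempty_iff_ne_empty.mpr h
          have := Measure.one_le_hausdorffMeasure_zero_of_nonempty hne
          rw [hA] at this
          simp at this
        simp [this]
      · set B := toMeasurable (Measure.hausdorffMeasure ((α - ε : ℝ≥0) : ℝ)) A with hB
        have hBm : MeasurableSet B := measurableSet_toMeasurable _ _
        have hB0 : Measure.hausdorffMeasure ((α - ε : ℝ≥0) : ℝ) B = 0 := by
          rw [hB, measure_toMeasurable]; exact hA
        have hBdim : dimH B ≤ ((α - ε : ℝ≥0) : ℝ≥0∞) :=
          dimH_le_of_hausdorffMeasure_ne_top (by rw [hB0]; exact ENNReal.zero_ne_top)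
        have hlt : ((α - ε : ℝ≥0) : ℝ≥0∞) < (α : ℝ≥0∞) := by
          exact_mod_cast tsub_lt_self hα hε
        have := hnull B hBm (lt_of_le_of_lt hBdim hlt)
        exact measure_mono_null (subset_toMeasurable _ _) this
    · -- mutual singularity with μH[α + ε]
      refine ⟨Eᶜ, hEm.compl, ?_, ?_⟩
      · rw [measure_compl hEm (measure_ne_top ν E), hE1, measure_univ, tsub_self]
      · rw [compl_compl]
        apply hausdorffMeasure_of_dimH_lt (d := α + ε)
        rw [hEdim]
        exact_mod_cast lt_add_of_pos_right α hε
  · intro h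
    constructor
    · -- construct E
      have hpos : ∀ k : ℕ, (0 : ℝ≥0) < ((k : ℝ≥0) + 1)⁻¹ := fun k => by positivity
      choose S hSm hS0 hScompl using fun k : ℕ => (h _ (hpos k)).2
      set E : Set (EuclideanSpace ℝ (Fin n)) := ⋂ k, (S k)ᶜ with hE
      have hEm : MeasurableSet E := MeasurableSet.iInter fun k => (hSm k).compl
      have hEν : ν E = 1 := by
        have hc : ν Eᶜ = 0 := by
          rw [hE, compl_iInter]
          simp only [compl_compl]
          exact measure_iUnion_null hS0
        have hcc := measure_compl hEm (measure_ne_top ν E)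
        rw [hc, measure_univ] at hcc
        exact le_antisymm prob_le_one (tsub_eq_zero_iff_le.mp hcc.symm)
      have hub : ∀ k : ℕ, dimH E ≤ ((α + ((k : ℝ≥0) + 1)⁻¹ : ℝ≥0) : ℝ≥0∞) := by
        intro k
        refine le_trans (dimH_mono (iInter_subset _ k)) ?_
        exact dimH_le_of_hausdorffMeasure_ne_top (by rw [hScompl k]; exact ENNReal.zero_ne_top)
      have hle : dimH E ≤ (α : ℝ≥0∞) := by
        refine ENNReal.le_of_forall_pos_le_add fun ε hε _ => ?_
        obtain ⟨k, hk⟩ := exists_nat_gt (ε⁻¹ : ℝ≥0)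
        have h1 : ε⁻¹ ≤ (k : ℝ≥0) + 1 := hk.le.trans (le_add_of_nonneg_right zero_le_one)
        have hk' : ((k : ℝ≥0) + 1)⁻¹ ≤ ε := by
          rw [← inv_inv ε]
          gcongr
        calc dimH E ≤ ((α + ((k : ℝ≥0) + 1)⁻¹ : ℝ≥0) : ℝ≥0∞) := hub k
          _ ≤ (α : ℝ≥0∞) + (ε : ℝ≥0∞) := by
              push_cast
              exact add_le_add_right (by exact_mod_cast hk') _
      have hge : (α : ℝ≥0∞) ≤ dimH E := by
        refine le_of_forall_lt fun d hd => ?_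
        obtain ⟨d', hdd', hd'α⟩ := ENNReal.lt_iff_exists_nnreal_btwn.mp hd
        have hd'α' : d' < α := by exact_mod_cast hd'α
        have hεpos : (0 : ℝ≥0) < α - d' := tsub_pos_of_lt hd'α'
        have hac := (h _ hεpos).1
        have hsub : (α - (α - d') : ℝ≥0) = d' := tsub_tsub_cancel_of_le hd'α'.le
        rw [hsub] at hac
        have hne : Measure.hausdorffMeasure ((d' : ℝ≥0) : ℝ) E ≠ 0 := by
          intro h0
          have := hac h0
          rw [hEν] at this
          simp at this
        exact lt_of_lt_of_le hdd' (le_dimH_of_hausdorffMeasure_ne_zero hne)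
      exact ⟨E, hEm, le_antisymm hle hge, hEν⟩
    · intro E _ hElt
      obtain ⟨d, hd1, hd2⟩ := ENNReal.lt_iff_exists_nnreal_btwn.mp hElt
      have hd2' : d < α := by exact_mod_cast hd2
      have hεpos : (0 : ℝ≥0) < α - d := tsub_pos_of_lt hd2'
      have hac := (h _ hεpos).1
      have hsub : (α - (α - d) : ℝ≥0) = d := tsub_tsub_cancel_of_le hd2'.le
      rw [hsub] at hac
      exact measure_zero_of_dimH_lt hac hd1
end

section
/- Let ν be a compactly supported Borel probability measure on ℝ^n, K > 0, and T : ℝ^n → ℝ^n a K-Lipschitz map with T(supp ν) ⊆ supp ν. Suppose ν is T-invariant (the pushforward of ν under T equals ν) and ergodic with respect to T. Then there exist constants c and c' such that for ν-almost every x, liminf_{r→0⁺} log ν(B(x,r))/log r = c and limsup_{r→0⁺} log ν(B(x,r))/log r = c'. -/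
open MeasureTheory Metric Set Filter
open scoped NNReal ENNReal Topology

/-- The (topological) support of a measure: the set of points all of whose
open neighbourhoods have positive measure. -/
def measureSupport {n : ℕ} (ν : Measure (EuclideanSpace ℝ (Fin n))) :
    Set (EuclideanSpace ℝ (Fin n)) :=
  {x | ∀ U : Set (EuclideanSpace ℝ (Fin n)), IsOpen U → x ∈ U → 0 < ν U}

/-- The upper local dimension of a measure `ν` at a point `x`:
`limsup_{r → 0⁺} log ν(B(x,r)) / log r`. -/
noncomputable def upperLocalDim {n : ℕ} (ν : Measure (EuclideanSpace ℝ (Fin n)))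
    (x : EuclideanSpace ℝ (Fin n)) : ℝ≥0∞ :=
  Filter.limsup
    (fun r : ℝ => if ν (ball x r) = 0 then ∞
      else ENNReal.ofReal (Real.log (ν (ball x r)).toReal / Real.log r))
    (𝓝[>] (0 : ℝ))

/-! ### Auxiliary definitions and lemmas -/

namespace LocalDimAux

variable {n : ℕ}

/-- The quantity whose liminf/limsup defines the local dimensions. -/
noncomputable def Fd (ν : Measure (EuclideanSpace ℝ (Fin n)))
    (x : EuclideanSpace ℝ (Fin n)) (r : ℝ) : ℝ≥0∞ :=
  if ν (ball x r) = 0 then ∞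
  else ENNReal.ofReal (Real.log (ν (ball x r)).toReal / Real.log r)

lemma lowerLocalDim_eq (ν : Measure (EuclideanSpace ℝ (Fin n))) (x) :
    lowerLocalDim ν x = Filter.liminf (Fd ν x) (𝓝[>] (0 : ℝ)) := rfl

lemma upperLocalDim_eq (ν : Measure (EuclideanSpace ℝ (Fin n))) (x) :
    upperLocalDim ν x = Filter.limsup (Fd ν x) (𝓝[>] (0 : ℝ)) := rfl

lemma measurable_measure_ball (ν : Measure (EuclideanSpace ℝ (Fin n))) [SFinite ν] (r : ℝ) :
    Measurable fun x => ν (ball x r) := by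
  have hs : MeasurableSet {p : EuclideanSpace ℝ (Fin n) × EuclideanSpace ℝ (Fin n) |
      dist p.2 p.1 < r} :=
    (isOpen_lt (continuous_snd.dist continuous_fst) continuous_const).measurableSet
  have h := measurable_measure_prodMk_left (ν := ν) hs
  exact h

lemma measurable_Fd (ν : Measure (EuclideanSpace ℝ (Fin n))) [SFinite ν] (r : ℝ) :
    Measurable fun x => Fd ν x r := by
  have h := measurable_measure_ball ν r
  unfold Fd
  refine Measurable.ite ?_ measurable_const ?_
  · exact h (measurableSet_singleton 0)
  · exact ENNReal.measurable_ofReal.comp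
      ((Real.measurable_log.comp h.ennreal_toReal).div_const _)

lemma measure_ball_eq_iSup (ν : Measure (EuclideanSpace ℝ (Fin n))) (x) {r : ℝ} (hr : 0 < r) :
    ν (ball x r) = ⨆ q : {q : ℚ // 0 < (q : ℝ) ∧ (q : ℝ) < r}, ν (ball x (q : ℝ)) := by
  have hball : ball x r = ⋃ q : {q : ℚ // 0 < (q : ℝ) ∧ (q : ℝ) < r}, ball x (q : ℝ) := by
    ext y
    simp only [mem_iUnion, mem_ball]
    constructor
    · intro h
      obtain ⟨q, hq1, hq2⟩ := exists_rat_btwn h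
      exact ⟨⟨q, dist_nonneg.trans_lt hq1, hq2⟩, hq1⟩
    · rintro ⟨q, hq⟩
      exact hq.trans q.2.2
  rw [hball, Directed.measure_iUnion]
  rintro ⟨q1, hq1⟩ ⟨q2, hq2⟩
  rcases le_total (q1 : ℝ) (q2 : ℝ) with h | h
  · exact ⟨⟨q2, hq2⟩, ball_subset_ball h, subset_rfl⟩
  · exact ⟨⟨q1, hq1⟩, subset_rfl, ball_subset_ball h⟩

lemma iInf_Fd_eq (ν : Measure (EuclideanSpace ℝ (Fin n))) [IsProbabilityMeasure ν] (x)
    {ε : ℝ} (hε0 : 0 < ε) (hε : ε ≤ 1 / 2) :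
    ⨅ r ∈ Ioo (0 : ℝ) ε, Fd ν x r
      = ⨅ (q : ℚ) (_ : (q : ℝ) ∈ Ioo (0 : ℝ) ε), Fd ν x (q : ℝ) := by
  refine le_antisymm (le_iInf₂ fun q hq => iInf₂_le (q : ℝ) hq) (le_iInf₂ fun r hr => ?_)
  obtain ⟨hr0, hrε⟩ := hr
  have hr1 : r < 1 := lt_of_lt_of_le hrε (by linarith)
  have hlogr : Real.log r < 0 := Real.log_neg hr0 hr1
  by_cases hm : ν (ball x r) = 0
  · simp [Fd, hm]
  · set m := ν (ball x r) with hmdef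
    have hmlt : m < ∞ := measure_lt_top _ _
    have hmR : 0 < m.toReal := ENNReal.toReal_pos hm hmlt.ne
    have hm1 : m ≤ 1 := prob_le_one (μ := ν) (s := ball x r)
    have hmR1 : m.toReal ≤ 1 := by
      simpa using ENNReal.toReal_mono (by norm_num) hm1
    set t := Real.log m.toReal / Real.log r with htdef
    have ht0 : 0 ≤ t :=
      div_nonneg_iff.mpr (Or.inr ⟨Real.log_nonpos hmR.le hmR1, hlogr.le⟩)
    have hFr : Fd ν x r = ENNReal.ofReal t := by simp [Fd, hm, ← hmdef, htdef]
    rw [hFr]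
    refine ENNReal.le_of_forall_pos_le_add fun δ hδ _ => ?_
    have hδ' : (0 : ℝ) < δ := hδ
    have hcont : ContinuousAt (fun u : ℝ => Real.log u / Real.log r) m.toReal :=
      (Real.continuousAt_log hmR.ne').div_const _
    have hev : ∀ᶠ u in 𝓝 m.toReal, Real.log u / Real.log r < t + δ :=
      hcont (Iio_mem_nhds (lt_add_of_pos_right t hδ'))
    obtain ⟨η, hη0, hη⟩ := Metric.eventually_nhds_iff.mp hev
    set s := min (η / 2) (m.toReal / 2) with hsdef
    have hs0 : 0 < s := lt_min (by linarith) (by linarith)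
    have hsη : s < η := (min_le_left _ _).trans_lt (by linarith)
    have hsm : s < m.toReal := (min_le_right _ _).trans_lt (by linarith)
    have hsub : m - ENNReal.ofReal s < m :=
      ENNReal.sub_lt_self hmlt.ne hm (ENNReal.ofReal_pos.mpr hs0).ne'
    have hsup2 : m = ⨆ q : {q : ℚ // 0 < (q : ℝ) ∧ (q : ℝ) < r}, ν (ball x (q : ℝ)) :=
      hmdef.trans (measure_ball_eq_iSup ν x hr0)
    obtain ⟨⟨q, hq0, hqr⟩, hq⟩ := lt_iSup_iff.mp (hsub.trans_eq hsup2)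
    set μq := ν (ball x (q : ℝ)) with hμqdef
    have hμq_le : μq ≤ m := measure_mono (ball_subset_ball hqr.le)
    have hsub_eq : m - ENNReal.ofReal s = ENNReal.ofReal (m.toReal - s) := by
      rw [ENNReal.ofReal_sub _ hs0.le, ENNReal.ofReal_toReal hmlt.ne]
    have hμq_pos : 0 < μq := by
      refine lt_of_le_of_lt ?_ hq
      rw [hsub_eq]
      exact zero_le
    have hμqlt : μq < ∞ := measure_lt_top _ _
    have huq_le : μq.toReal ≤ m.toReal := ENNReal.toReal_mono hmlt.ne hμq_le
    have huq_gt : m.toReal - s < μq.toReal := by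
      rw [hsub_eq] at hq
      calc m.toReal - s = (ENNReal.ofReal (m.toReal - s)).toReal := by
            rw [ENNReal.toReal_ofReal (by linarith)]
        _ < μq.toReal := ENNReal.toReal_strict_mono hμqlt.ne hq
    have huq0 : 0 < μq.toReal := ENNReal.toReal_pos hμq_pos.ne' hμqlt.ne
    have hdist : dist μq.toReal m.toReal < η := by
      rw [Real.dist_eq, abs_lt]
      constructor <;> linarith
    have hq' : Real.log μq.toReal / Real.log r < t + δ := hη hdist
    have hq1 : (q : ℝ) < 1 := hqr.trans hr1
    have hlogq : Real.log q < Real.log r := Real.log_lt_log hq0 hqr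
    have hlogq0 : Real.log q < 0 := hlogq.trans hlogr
    have hloguq : Real.log μq.toReal ≤ 0 := Real.log_nonpos huq0.le (huq_le.trans hmR1)
    have key : Real.log μq.toReal / Real.log q ≤ Real.log μq.toReal / Real.log r := by
      rw [show Real.log μq.toReal / Real.log q
            = -Real.log μq.toReal / -Real.log q from (neg_div_neg_eq _ _).symm,
          show Real.log μq.toReal / Real.log r
            = -Real.log μq.toReal / -Real.log r from (neg_div_neg_eq _ _).symm]
      exact div_le_div_of_nonneg_left (by linarith) (by linarith) (by linarith)
    have hqmem : (q : ℝ) ∈ Ioo (0 : ℝ) ε := ⟨hq0, hqr.trans hrε⟩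
    refine (iInf₂_le q hqmem).trans ?_
    have hFq : Fd ν x (q : ℝ) = ENNReal.ofReal (Real.log μq.toReal / Real.log q) := by
      simp [Fd, hμq_pos.ne', ← hμqdef]
    rw [hFq]
    calc ENNReal.ofReal (Real.log μq.toReal / Real.log q)
        ≤ ENNReal.ofReal (t + δ) := ENNReal.ofReal_le_ofReal (key.trans hq'.le)
      _ = ENNReal.ofReal t + δ := by
          rw [ENNReal.ofReal_add ht0 hδ'.le, ENNReal.ofReal_coe_nnreal]

lemma iSup_Fd_eq (ν : Measure (EuclideanSpace ℝ (Fin n))) [IsProbabilityMeasure ν] (x)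
    {ε : ℝ} (hε0 : 0 < ε) (hε : ε ≤ 1 / 2) :
    ⨆ r ∈ Ioo (0 : ℝ) ε, Fd ν x r
      = ⨆ (q : ℚ) (_ : (q : ℝ) ∈ Ioo (0 : ℝ) ε), Fd ν x (q : ℝ) := by
  refine le_antisymm (iSup₂_le fun r hr => ?_) (iSup₂_le fun q hq => le_iSup₂_of_le (q : ℝ) hq le_rfl)
  obtain ⟨hr0, hrε⟩ := hr
  have hr1 : r < 1 := lt_of_lt_of_le hrε (by linarith)
  have hlogr : Real.log r < 0 := Real.log_neg hr0 hr1
  by_cases hm : ν (ball x r) = 0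
  · obtain ⟨q, hq0, hqr⟩ := exists_rat_btwn hr0
    have hq0' : (0 : ℝ) < q := hq0
    have hμq : ν (ball x (q : ℝ)) = 0 := measure_mono_null (ball_subset_ball hqr.le) hm
    refine le_trans le_top (le_iSup₂_of_le q ⟨hq0', hqr.trans hrε⟩ ?_)
    simp [Fd, hμq]
  · set m := ν (ball x r) with hmdef
    have hmlt : m < ∞ := measure_lt_top _ _
    have hmR : 0 < m.toReal := ENNReal.toReal_pos hm hmlt.ne
    have hmR1 : m.toReal ≤ 1 := by
      simpa using ENNReal.toReal_mono (show (1 : ℝ≥0∞) ≠ ∞ by norm_num)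
        (prob_le_one (μ := ν) (s := ball x r))
    set t := Real.log m.toReal / Real.log r with htdef
    have hFr : Fd ν x r = ENNReal.ofReal t := by simp [Fd, hm, ← hmdef, htdef]
    rw [hFr]
    refine ENNReal.le_of_forall_pos_le_add fun δ hδ _ => ?_
    have hδ' : (0 : ℝ) < δ := hδ
    have hcont : ContinuousAt (fun u : ℝ => Real.log m.toReal / Real.log u) r :=
      continuousAt_const.div (Real.continuousAt_log hr0.ne') hlogr.ne
    have hev : ∀ᶠ u in 𝓝 r, t - δ < Real.log m.toReal / Real.log u :=
      hcont (Ioi_mem_nhds (sub_lt_self t hδ'))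
    obtain ⟨η, hη0, hη⟩ := Metric.eventually_nhds_iff.mp hev
    have hmax : max (r - η) (r / 2) < r := max_lt (by linarith) (by linarith)
    obtain ⟨q, hq1, hq2⟩ := exists_rat_btwn hmax
    have hq0 : (0 : ℝ) < q := by
      have h2 : r / 2 ≤ max (r - η) (r / 2) := le_max_right _ _
      have := h2.trans hq1.le
      linarith
    have hqr : (q : ℝ) < r := hq2
    have hdist : dist (q : ℝ) r < η := by
      rw [Real.dist_eq, abs_lt]
      have : r - η < (q : ℝ) := lt_of_le_of_lt (le_max_left _ _) hq1
      constructor <;> linarith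
    have hq' : t - δ < Real.log m.toReal / Real.log q := hη hdist
    have hlogq : Real.log q < Real.log r := Real.log_lt_log hq0 hqr
    have hlogq0 : Real.log q < 0 := hlogq.trans hlogr
    have hqmem : (q : ℝ) ∈ Ioo (0 : ℝ) ε := ⟨hq0, hqr.trans hrε⟩
    refine le_trans ?_ (add_le_add_left (le_iSup₂_of_le q hqmem le_rfl) _)
    set μq := ν (ball x (q : ℝ)) with hμqdef
    by_cases hμq0 : μq = 0
    · simp [Fd, ← hμqdef, hμq0]
    · have hμqlt : μq < ∞ := measure_lt_top _ _
      have huq0 : 0 < μq.toReal := ENNReal.toReal_pos hμq0 hμqlt.ne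
      have hμq_le : μq ≤ m := measure_mono (ball_subset_ball hqr.le)
      have huq_le : μq.toReal ≤ m.toReal := ENNReal.toReal_mono hmlt.ne hμq_le
      have hloguq : Real.log μq.toReal ≤ Real.log m.toReal :=
        Real.log_le_log huq0 huq_le
      have hkey : Real.log m.toReal / Real.log q ≤ Real.log μq.toReal / Real.log q := by
        rw [show Real.log m.toReal / Real.log q
              = -Real.log m.toReal / -Real.log q from (neg_div_neg_eq _ _).symm,
            show Real.log μq.toReal / Real.log q
              = -Real.log μq.toReal / -Real.log q from (neg_div_neg_eq _ _).symm]
        rw [div_eq_mul_inv, div_eq_mul_inv]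
        exact mul_le_mul_of_nonneg_right (by linarith)
          (inv_nonneg.mpr (by linarith))
      have hquot0 : 0 ≤ Real.log μq.toReal / Real.log q :=
        div_nonneg_iff.mpr (Or.inr ⟨Real.log_nonpos huq0.le (huq_le.trans hmR1), hlogq0.le⟩)
      have hFq : Fd ν x (q : ℝ) = ENNReal.ofReal (Real.log μq.toReal / Real.log q) := by
        simp [Fd, ← hμqdef, hμq0]
      rw [hFq]
      calc ENNReal.ofReal t
          ≤ ENNReal.ofReal (Real.log μq.toReal / Real.log q + δ) := by
            refine ENNReal.ofReal_le_ofReal ?_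
            have : t - δ < Real.log μq.toReal / Real.log q := hq'.trans_le hkey
            linarith
        _ = ENNReal.ofReal (Real.log μq.toReal / Real.log q) + δ := by
            rw [ENNReal.ofReal_add hquot0 hδ'.le, ENNReal.ofReal_coe_nnreal]

lemma hasBasis_Ioi : (𝓝[>] (0 : ℝ)).HasBasis (fun _ : ℕ => True)
    (fun k => Ioo (0 : ℝ) (1 / (k + 2))) := by
  refine (nhdsGT_basis (0 : ℝ)).to_hasBasis (fun ε hε => ?_) (fun k _ => ?_)
  · obtain ⟨k, hk⟩ := exists_nat_gt (1 / ε)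
    refine ⟨k, trivial, Ioo_subset_Ioo le_rfl ?_⟩
    rw [div_le_iff₀ (by positivity)]
    rw [div_lt_iff₀ hε] at hk
    nlinarith
  · exact ⟨1 / (k + 2), by positivity, subset_rfl⟩

lemma one_div_le_half (k : ℕ) : (1 : ℝ) / (k + 2) ≤ 1 / 2 := by
  apply div_le_div_of_nonneg_left (by norm_num) (by norm_num)
  · push_cast; linarith [Nat.cast_nonneg (α := ℝ) k]

lemma lowerLocalDim_eq_iSup (ν : Measure (EuclideanSpace ℝ (Fin n)))
    [IsProbabilityMeasure ν] (x) :
    lowerLocalDim ν x = ⨆ k : ℕ, ⨅ (q : ℚ)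
      (_ : (q : ℝ) ∈ Ioo (0 : ℝ) (1 / (k + 2))), Fd ν x (q : ℝ) := by
  rw [lowerLocalDim_eq, hasBasis_Ioi.liminf_eq_iSup_iInf]
  simp only [iSup_true]
  refine iSup_congr fun k => ?_
  exact iInf_Fd_eq ν x (by positivity) (one_div_le_half k)

lemma upperLocalDim_eq_iInf (ν : Measure (EuclideanSpace ℝ (Fin n)))
    [IsProbabilityMeasure ν] (x) :
    upperLocalDim ν x = ⨅ k : ℕ, ⨆ (q : ℚ)
      (_ : (q : ℝ) ∈ Ioo (0 : ℝ) (1 / (k + 2))), Fd ν x (q : ℝ) := by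
  rw [upperLocalDim_eq, hasBasis_Ioi.limsup_eq_iInf_iSup]
  simp only [iInf_true]
  refine iInf_congr fun k => ?_
  exact iSup_Fd_eq ν x (by positivity) (one_div_le_half k)

lemma measurable_lowerLocalDim (ν : Measure (EuclideanSpace ℝ (Fin n)))
    [IsProbabilityMeasure ν] : Measurable (lowerLocalDim ν) := by
  have h : lowerLocalDim ν = fun x => ⨆ k : ℕ, ⨅ (q : ℚ)
      (_ : (q : ℝ) ∈ Ioo (0 : ℝ) (1 / (k + 2))), Fd ν x (q : ℝ) :=
    funext fun x => lowerLocalDim_eq_iSup ν x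
  rw [h]
  refine Measurable.iSup fun k => Measurable.iInf fun q => ?_
  by_cases hq : (q : ℝ) ∈ Ioo (0 : ℝ) (1 / (k + 2))
  · simp only [iInf_pos hq]
    exact measurable_Fd ν (q : ℝ)
  · simp only [iInf_neg hq]
    exact measurable_const

lemma measurable_upperLocalDim (ν : Measure (EuclideanSpace ℝ (Fin n)))
    [IsProbabilityMeasure ν] : Measurable (upperLocalDim ν) := by
  have h : upperLocalDim ν = fun x => ⨅ k : ℕ, ⨆ (q : ℚ)
      (_ : (q : ℝ) ∈ Ioo (0 : ℝ) (1 / (k + 2))), Fd ν x (q : ℝ) :=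
    funext fun x => upperLocalDim_eq_iInf ν x
  rw [h]
  refine Measurable.iInf fun k => Measurable.iSup fun q => ?_
  by_cases hq : (q : ℝ) ∈ Ioo (0 : ℝ) (1 / (k + 2))
  · simp only [iSup_pos hq]
    exact measurable_Fd ν (q : ℝ)
  · simp only [iSup_neg hq]
    exact measurable_const


/-! ### Dynamics lemmas -/

set_option maxHeartbeats 1000000 in
lemma measure_ball_le_map (ν : Measure (EuclideanSpace ℝ (Fin n))) {K : ℝ≥0} (hK : 0 < K)
    {T : EuclideanSpace ℝ (Fin n) → EuclideanSpace ℝ (Fin n)} (hT : LipschitzWith K T)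
    (hinv : Measure.map T ν = ν) (x : EuclideanSpace ℝ (Fin n)) (r : ℝ) :
    ν (ball x r) ≤ ν (ball (T x) ((K : ℝ) * r)) := by
  have hsub : ball x r ⊆ T ⁻¹' ball (T x) ((K : ℝ) * r) := by
    intro y hy
    have h1 : dist (T y) (T x) ≤ (K : ℝ) * dist y x := hT.dist_le_mul y x
    have hK' : (0 : ℝ) < K := by exact_mod_cast hK
    have hy' : dist y x < r := mem_ball.mp hy
    have h2 : (K : ℝ) * dist y x < (K : ℝ) * r := mul_lt_mul_of_pos_left hy' hK'
    have h3 : T y ∈ ball (T x) ((K : ℝ) * r) := mem_ball.mpr (h1.trans_lt h2)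
    exact Set.mem_preimage.mpr h3
  calc ν (ball x r) ≤ ν (T ⁻¹' ball (T x) ((K : ℝ) * r)) := measure_mono hsub
    _ = (Measure.map T ν) (ball (T x) ((K : ℝ) * r)) :=
        (Measure.map_apply hT.continuous.measurable measurableSet_ball).symm
    _ = ν (ball (T x) ((K : ℝ) * r)) := by rw [hinv]

lemma map_mul_nhdsWithin {K : ℝ} (hK : 0 < K) :
    Filter.map (fun r : ℝ => K * r) (𝓝[>] (0 : ℝ)) = 𝓝[>] (0 : ℝ) := by
  have hten : ∀ c : ℝ, 0 < c → Tendsto (fun r : ℝ => c * r) (𝓝[>] (0:ℝ)) (𝓝[>] (0:ℝ)) := by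
    intro c hc
    rw [tendsto_nhdsWithin_iff]
    constructor
    · have h1 : Tendsto (fun r : ℝ => c * r) (𝓝 0) (𝓝 0) := by
        simpa using (continuous_mul_left c).tendsto (0 : ℝ)
      exact h1.mono_left nhdsWithin_le_nhds
    · filter_upwards [self_mem_nhdsWithin] with r hr
      exact mul_pos hc hr
  refine le_antisymm (hten K hK) ?_
  have hcomp : (fun r : ℝ => K * r) ∘ (fun r : ℝ => K⁻¹ * r) = id := by
    funext r
    simp [← mul_assoc, mul_inv_cancel₀ hK.ne']
  calc 𝓝[>] (0:ℝ) = Filter.map ((fun r : ℝ => K * r) ∘ (fun r : ℝ => K⁻¹ * r)) (𝓝[>] (0:ℝ)) := by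
        rw [hcomp, Filter.map_id]
    _ = Filter.map (fun r : ℝ => K * r) (Filter.map (fun r : ℝ => K⁻¹ * r) (𝓝[>] (0:ℝ))) :=
        (Filter.map_map).symm
    _ ≤ Filter.map (fun r : ℝ => K * r) (𝓝[>] (0:ℝ)) :=
        Filter.map_mono (hten K⁻¹ (by positivity))

lemma liminf_map_aux {α β : Type*} (m : α → β) (l : Filter α) (u : β → ℝ≥0∞) :
    Filter.liminf u (Filter.map m l) = Filter.liminf (fun a => u (m a)) l := by
  simp only [Filter.liminf_eq, eventually_map]

lemma limsup_map_aux {α β : Type*} (m : α → β) (l : Filter α) (u : β → ℝ≥0∞) :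
    Filter.limsup u (Filter.map m l) = Filter.limsup (fun a => u (m a)) l := by
  simp only [Filter.limsup_eq, eventually_map]

lemma liminf_const_mul_aux {α : Type*} {f : Filter α} {u : α → ℝ≥0∞} {a : ℝ≥0∞}
    (h0 : a ≠ 0) (htop : a ≠ ⊤) :
    f.liminf (fun x => a * u x) = a * f.liminf u := by
  let g := fun x : ℝ≥0∞ => a * x
  have hg_bij : Function.Bijective g :=
    Function.bijective_iff_has_inverse.mpr
      ⟨fun x => a⁻¹ * x,
        ⟨fun x => by simp [g, ← mul_assoc, ENNReal.inv_mul_cancel h0 htop], fun x => by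
          simp [g, ← mul_assoc, ENNReal.mul_inv_cancel h0 htop]⟩⟩
  have hg_mono : StrictMono g :=
    Monotone.strictMono_of_injective (fun _ _ _ => by rwa [ENNReal.mul_le_mul_iff_right h0 htop]) hg_bij.1
  let g_iso := StrictMono.orderIsoOfSurjective g hg_mono hg_bij.2
  exact (OrderIso.liminf_apply g_iso).symm

lemma Fd_comp_le (ν : Measure (EuclideanSpace ℝ (Fin n))) [IsProbabilityMeasure ν]
    {K : ℝ≥0} (hK : 0 < K)
    {T : EuclideanSpace ℝ (Fin n) → EuclideanSpace ℝ (Fin n)} (hT : LipschitzWith K T)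
    (hinv : Measure.map T ν = ν) (x : EuclideanSpace ℝ (Fin n)) {ε : ℝ} (hε : 0 < ε) :
    ∀ᶠ r in 𝓝[>] (0 : ℝ),
      Fd ν (T x) ((K : ℝ) * r) ≤ (1 + ENNReal.ofReal ε) * Fd ν x r := by
  have hK' : (0 : ℝ) < K := hK
  set C := |Real.log K| with hC
  set r₀ := Real.exp (-(C * (1 + ε) / ε) - 1) with hr₀
  have hr₀0 : 0 < r₀ := Real.exp_pos _
  filter_upwards [Ioo_mem_nhdsGT_of_mem
    (show (0 : ℝ) ∈ Ico (0 : ℝ) r₀ from ⟨le_rfl, hr₀0⟩)] with r hr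
  obtain ⟨hr0, hrr₀⟩ := hr
  have hC0 : 0 ≤ C := abs_nonneg _
  have hlogr : Real.log r < -(C * (1 + ε) / ε) - 1 := by
    have := Real.log_lt_log hr0 hrr₀
    rwa [Real.log_exp] at this
  have hCdiv : 0 ≤ C * (1 + ε) / ε := by positivity
  have hlogr0 : Real.log r < 0 := by linarith
  have hlogK_le : Real.log K ≤ C := le_abs_self _
  have hlogKr : Real.log ((K : ℝ) * r) = Real.log K + Real.log r :=
    Real.log_mul hK'.ne' hr0.ne'
  have hεlog : ε * Real.log r ≤ -(C * (1 + ε)) - ε := by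
    have h1 := mul_le_mul_of_nonneg_left hlogr.le hε.le
    have h2 : ε * (-(C * (1 + ε) / ε) - 1) = -(C * (1 + ε)) - ε := by
      field_simp
    linarith
  have hCle : C ≤ C * (1 + ε) / ε := by
    rw [le_div_iff₀ hε]
    nlinarith
  have hL' : Real.log ((K : ℝ) * r) < 0 := by
    rw [hlogKr]; linarith
  have hrel : -Real.log r ≤ (1 + ε) * (-Real.log ((K : ℝ) * r)) := by
    rw [hlogKr]
    nlinarith [mul_le_mul_of_nonneg_left hlogK_le (show (0:ℝ) ≤ 1 + ε by linarith)]
  by_cases hm : ν (ball x r) = 0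
  · have hFx : Fd ν x r = ⊤ := by simp [Fd, hm]
    rw [hFx, ENNReal.mul_top (by simp : (1 : ℝ≥0∞) + ENNReal.ofReal ε ≠ 0)]
    exact le_top
  · have hle := measure_ball_le_map ν hK hT hinv x r
    have hm' : ν (ball (T x) ((K : ℝ) * r)) ≠ 0 := by
      intro h0
      exact hm (le_antisymm (h0 ▸ hle) zero_le)
    have hμlt : ν (ball x r) < ∞ := measure_lt_top _ _
    have hμ'lt : ν (ball (T x) ((K : ℝ) * r)) < ∞ := measure_lt_top _ _
    have hu0 : 0 < (ν (ball x r)).toReal := ENNReal.toReal_pos hm hμlt.ne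
    have hu'0 : 0 < (ν (ball (T x) ((K : ℝ) * r))).toReal := ENNReal.toReal_pos hm' hμ'lt.ne
    have huu' : (ν (ball x r)).toReal ≤ (ν (ball (T x) ((K : ℝ) * r))).toReal :=
      ENNReal.toReal_mono hμ'lt.ne hle
    have hu'1 : (ν (ball (T x) ((K : ℝ) * r))).toReal ≤ 1 := by
      simpa using ENNReal.toReal_mono (by norm_num)
        (prob_le_one (μ := ν) (s := ball (T x) ((K : ℝ) * r)))
    unfold Fd
    rw [if_neg hm', if_neg hm]
    have hc : (1 : ℝ≥0∞) + ENNReal.ofReal ε = ENNReal.ofReal (1 + ε) := by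
      rw [ENNReal.ofReal_add (by norm_num) hε.le, ENNReal.ofReal_one]
    rw [hc, ← ENNReal.ofReal_mul (by linarith)]
    apply ENNReal.ofReal_le_ofReal
    set A := -Real.log (ν (ball (T x) ((K : ℝ) * r))).toReal with hA
    set B := -Real.log (ν (ball x r)).toReal with hB
    have hA0 : 0 ≤ A := by
      rw [hA, neg_nonneg]
      exact Real.log_nonpos hu'0.le hu'1
    have hAB : A ≤ B := by
      rw [hA, hB, neg_le_neg_iff]
      exact Real.log_le_log hu0 huu'
    have hB0 : 0 ≤ B := hA0.trans hAB
    have e1 : Real.log (ν (ball (T x) ((K : ℝ) * r))).toReal / Real.log ((K : ℝ) * r)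
        = A / -Real.log ((K : ℝ) * r) := (neg_div_neg_eq _ _).symm
    have e2 : Real.log (ν (ball x r)).toReal / Real.log r = B / -Real.log r :=
      (neg_div_neg_eq _ _).symm
    rw [e1, e2]
    have h1 : A / -Real.log ((K : ℝ) * r) ≤ B / -Real.log ((K : ℝ) * r) := by
      rw [div_eq_mul_inv, div_eq_mul_inv]
      exact mul_le_mul_of_nonneg_right hAB (inv_nonneg.mpr (by linarith))
    have h2 : B / -Real.log ((K : ℝ) * r) ≤ (1 + ε) * (B / -Real.log r) := by
      rw [show (1 + ε) * (B / -Real.log r) = ((1 + ε) * B) / -Real.log r from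
        (mul_div_assoc _ _ _).symm]
      rw [div_le_div_iff₀ (by linarith) (by linarith)]
      nlinarith [mul_le_mul_of_nonneg_left hrel hB0]
    exact h1.trans h2

lemma lowerLocalDim_comp_le (ν : Measure (EuclideanSpace ℝ (Fin n))) [IsProbabilityMeasure ν]
    {K : ℝ≥0} (hK : 0 < K)
    {T : EuclideanSpace ℝ (Fin n) → EuclideanSpace ℝ (Fin n)} (hT : LipschitzWith K T)
    (hinv : Measure.map T ν = ν) (x : EuclideanSpace ℝ (Fin n)) :
    lowerLocalDim ν (T x) ≤ lowerLocalDim ν x := by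
  have hK' : (0 : ℝ) < K := hK
  have key : ∀ ε : ℝ, 0 < ε →
      lowerLocalDim ν (T x) ≤ (1 + ENNReal.ofReal ε) * lowerLocalDim ν x := by
    intro ε hε
    have hmap : lowerLocalDim ν (T x)
        = Filter.liminf (fun r : ℝ => Fd ν (T x) ((K : ℝ) * r)) (𝓝[>] (0 : ℝ)) := by
      rw [lowerLocalDim_eq]
      conv_lhs => rw [← map_mul_nhdsWithin hK']
      exact liminf_map_aux _ _ _
    rw [hmap, lowerLocalDim_eq,
      ← liminf_const_mul_aux (a := 1 + ENNReal.ofReal ε) (by simp) (by simp)]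
    exact liminf_le_liminf (Fd_comp_le ν hK hT hinv x hε)
  refine ENNReal.le_of_forall_pos_le_add fun δ hδ hb => ?_
  have hδ' : (0 : ℝ) < δ := hδ
  set b := lowerLocalDim ν x with hbdef
  set ε : ℝ := (δ : ℝ) / (b.toReal + 1) with hεdef
  have hbR : 0 ≤ b.toReal := ENNReal.toReal_nonneg
  have hε0 : 0 < ε := by positivity
  have h := key ε hε0
  have hmul : ENNReal.ofReal ε * b ≤ (δ : ℝ≥0∞) := by
    conv_lhs => rw [← ENNReal.ofReal_toReal hb.ne]
    rw [← ENNReal.ofReal_mul hε0.le, ← ENNReal.ofReal_coe_nnreal]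
    apply ENNReal.ofReal_le_ofReal
    rw [hεdef, div_mul_eq_mul_div, div_le_iff₀ (by positivity)]
    nlinarith
  calc lowerLocalDim ν (T x) ≤ (1 + ENNReal.ofReal ε) * b := h
    _ = b + ENNReal.ofReal ε * b := by rw [add_mul, one_mul]
    _ ≤ b + δ := add_le_add_right hmul _

lemma upperLocalDim_comp_le (ν : Measure (EuclideanSpace ℝ (Fin n))) [IsProbabilityMeasure ν]
    {K : ℝ≥0} (hK : 0 < K)
    {T : EuclideanSpace ℝ (Fin n) → EuclideanSpace ℝ (Fin n)} (hT : LipschitzWith K T)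
    (hinv : Measure.map T ν = ν) (x : EuclideanSpace ℝ (Fin n)) :
    upperLocalDim ν (T x) ≤ upperLocalDim ν x := by
  have hK' : (0 : ℝ) < K := hK
  have key : ∀ ε : ℝ, 0 < ε →
      upperLocalDim ν (T x) ≤ (1 + ENNReal.ofReal ε) * upperLocalDim ν x := by
    intro ε hε
    have hmap : upperLocalDim ν (T x)
        = Filter.limsup (fun r : ℝ => Fd ν (T x) ((K : ℝ) * r)) (𝓝[>] (0 : ℝ)) := by
      rw [upperLocalDim_eq]
      conv_lhs => rw [← map_mul_nhdsWithin hK']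
      exact limsup_map_aux _ _ _
    rw [hmap, upperLocalDim_eq,
      ← ENNReal.limsup_const_mul_of_ne_top (a := 1 + ENNReal.ofReal ε) (by simp)]
    exact limsup_le_limsup (Fd_comp_le ν hK hT hinv x hε)
  refine ENNReal.le_of_forall_pos_le_add fun δ hδ hb => ?_
  have hδ' : (0 : ℝ) < δ := hδ
  set b := upperLocalDim ν x with hbdef
  set ε : ℝ := (δ : ℝ) / (b.toReal + 1) with hεdef
  have hbR : 0 ≤ b.toReal := ENNReal.toReal_nonneg
  have hε0 : 0 < ε := by positivity
  have h := key ε hε0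
  have hmul : ENNReal.ofReal ε * b ≤ (δ : ℝ≥0∞) := by
    conv_lhs => rw [← ENNReal.ofReal_toReal hb.ne]
    rw [← ENNReal.ofReal_mul hε0.le, ← ENNReal.ofReal_coe_nnreal]
    apply ENNReal.ofReal_le_ofReal
    rw [hεdef, div_mul_eq_mul_div, div_le_iff₀ (by positivity)]
    nlinarith
  calc upperLocalDim ν (T x) ≤ (1 + ENNReal.ofReal ε) * b := h
    _ = b + ENNReal.ofReal ε * b := by rw [add_mul, one_mul]
    _ ≤ b + δ := add_le_add_right hmul _

lemma ae_comp_eq {α : Type*} [MeasurableSpace α] {ν : Measure α} [IsProbabilityMeasure ν]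
    {T : α → α} (hTm : Measurable T) (hinv : Measure.map T ν = ν) {f : α → ℝ≥0∞}
    (hf : Measurable f) (hle : ∀ x, f (T x) ≤ f x) : f ∘ T =ᵐ[ν] f := by
  have hN : ∀ N : ℕ, ∀ᵐ x ∂ν, min (f (T x)) (N : ℝ≥0∞) = min (f x) (N : ℝ≥0∞) := by
    intro N
    set g : α → ℝ≥0∞ := fun x => min (f x) (N : ℝ≥0∞) with hg
    have hgm : Measurable g := hf.min measurable_const
    have hgTm : Measurable fun x => g (T x) := hgm.comp hTm
    have hint : ∫⁻ x, g (T x) ∂ν = ∫⁻ x, g x ∂ν := by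
      conv_rhs => rw [← hinv]
      rw [lintegral_map hgm hTm]
    have hgle : ∀ x, g (T x) ≤ g x := fun x => min_le_min (hle x) le_rfl
    have hfin : ∫⁻ x, g (T x) ∂ν ≠ ∞ := by
      refine ne_of_lt (lt_of_le_of_lt (lintegral_mono fun x => min_le_right _ _) ?_)
      rw [lintegral_const, measure_univ, mul_one]
      exact ENNReal.natCast_lt_top N
    have hzero : ∫⁻ x, (g x - g (T x)) ∂ν = 0 := by
      rw [lintegral_sub hgTm hfin (Eventually.of_forall hgle), hint, tsub_self]
    have hae := (lintegral_eq_zero_iff (hgm.sub hgTm)).mp hzero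
    filter_upwards [hae] with x hx
    have hx' : g x - g (T x) = 0 := hx
    exact le_antisymm (hgle x) (tsub_eq_zero_iff_le.mp hx')
  filter_upwards [ae_all_iff.mpr hN] with x hx
  show f (T x) = f x
  rcases eq_or_ne (f x) ∞ with htop | hfin
  · rw [htop]
    by_contra hne
    obtain ⟨N, hNgt⟩ := ENNReal.exists_nat_gt hne
    have hx' := hx N
    rw [htop, min_eq_right (le_top : (N : ℝ≥0∞) ≤ ⊤)] at hx'
    have hNle : (N : ℝ≥0∞) ≤ f (T x) := min_eq_right_iff.mp hx'
    exact absurd hNgt (not_lt.mpr hNle)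
  · obtain ⟨N, hNgt⟩ := ENNReal.exists_nat_gt hfin
    have hx' := hx N
    rw [min_eq_left hNgt.le] at hx'
    have hTlt : f (T x) < N := lt_of_le_of_lt (hle x) hNgt
    rw [min_eq_left hTlt.le] at hx'
    exact hx'

end LocalDimAux

theorem stmt_8 (n : ℕ) (ν : Measure (EuclideanSpace ℝ (Fin n)))
    [IsProbabilityMeasure ν] (hcompact : IsCompact (measureSupport ν))
    (K : ℝ≥0) (hK : 0 < K)
    (T : EuclideanSpace ℝ (Fin n) → EuclideanSpace ℝ (Fin n))
    (hT : LipschitzWith K T)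
    (hTsupp : T '' measureSupport ν ⊆ measureSupport ν)
    (hinv : Measure.map T ν = ν)
    (herg : Ergodic T ν) :
    ∃ c c' : ℝ≥0∞,
      (∀ᵐ x ∂ν, lowerLocalDim ν x = c) ∧ (∀ᵐ x ∂ν, upperLocalDim ν x = c') := by
  have hmeasL := LocalDimAux.measurable_lowerLocalDim ν
  have hmeasU := LocalDimAux.measurable_upperLocalDim ν
  have haeL : lowerLocalDim ν ∘ T =ᵐ[ν] lowerLocalDim ν :=
    LocalDimAux.ae_comp_eq hT.continuous.measurable hinv hmeasL
      (LocalDimAux.lowerLocalDim_comp_le ν hK hT hinv)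
  have haeU : upperLocalDim ν ∘ T =ᵐ[ν] upperLocalDim ν :=
    LocalDimAux.ae_comp_eq hT.continuous.measurable hinv hmeasU
      (LocalDimAux.upperLocalDim_comp_le ν hK hT hinv)
  obtain ⟨c, hc⟩ := herg.ae_eq_const_of_ae_eq_comp₀ hmeasL.nullMeasurable haeL
  obtain ⟨c', hc'⟩ := herg.ae_eq_const_of_ae_eq_comp₀ hmeasU.nullMeasurable haeU
  refine ⟨c, c', ?_, ?_⟩
  · filter_upwards [hc] with x hx
    exact hx
  · filter_upwards [hc'] with x hx
    exact hx
end
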